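/- Let R be a ring, let a ∈ √Δ(R) and b ∈ U(R) with ab = ba. Then ab ∈ √Δ(R). -/
import Mathlib

/-- Δ(R) = {x : 1 - x*u is a unit for every unit u}. -/
def Delta (R : Type*) [Ring R] : Set R :=
  {x | ∀ u : R, IsUnit u → IsUnit (1 - x * u)}

/-- √Δ(R) = {x : x^n ∈ Δ(R) for some n ≥ 1}. -/
def sqrtDelta (R : Type*) [Ring R] : Set R :=
  {x | ∃ n : ℕ, 1 ≤ n ∧ x ^ n ∈ Delta R}

theorem stmt_0 {R : Type*} [Ring R] (a b : R) (ha : a ∈ sqrtDelta R)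
    (hb : IsUnit b) (hcomm : a * b = b * a) : a * b ∈ sqrtDelta R := by
  obtain ⟨n, hn, hΔ⟩ := ha
  refine ⟨n, hn, fun u hu => ?_⟩
  have h : (a * b) ^ n = a ^ n * b ^ n := (Commute.mul_pow hcomm n)
  rw [h, mul_assoc]
  exact hΔ _ ((hb.pow n).mul hu)
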